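/- arXiv:0805.3497 — 5 statements merged into one kernel-verified Lean document; each statement's English description precedes it below -/
import Mathlib

section
/- Each QR-algebra T decomposes as a direct product (orthogonal direct sum of pairwise orthogonal ideals) of its unique maximal abelian ideal I₀ and finitely many non-abelian simple ideals I₁,...,I_r, and this decomposition is unique up to the order of the simple factors. -/
open scoped RealInnerProductSpace

variable {T : Type*} [NormedAddCommGroup T] [InnerProductSpace ℝ T]

/-- An ideal of the QR-algebra (T, *): a subspace I with T * I ⊆ I. -/
def IsIdeal (mul : T →ₗ[ℝ] T →ₗ[ℝ] T) (I : Submodule ℝ T) : Prop :=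
  ∀ x y, y ∈ I → mul x y ∈ I

/-- An abelian ideal: an ideal on which the product vanishes. -/
def IsAbelianIdeal (mul : T →ₗ[ℝ] T →ₗ[ℝ] T) (I : Submodule ℝ T) : Prop :=
  IsIdeal mul I ∧ ∀ x ∈ I, ∀ y ∈ I, mul x y = 0

/-- A simple ideal: a nonzero ideal whose only ideals are {0} and itself. -/
def IsSimpleIdeal (mul : T →ₗ[ℝ] T →ₗ[ℝ] T) (I : Submodule ℝ T) : Prop :=
  IsIdeal mul I ∧ I ≠ ⊥ ∧
    ∀ J : Submodule ℝ T, J ≤ I → (∀ x ∈ I, ∀ y ∈ J, mul x y ∈ J) → J = ⊥ ∨ J = I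

section QRAux
open Submodule Module

variable (mul : T →ₗ[ℝ] T →ₗ[ℝ] T)

theorem qr_anticomm (halt : ∀ X, mul X X = 0) (X Y : T) : mul X Y = - mul Y X := by
  have h := halt (X + Y)
  simp only [map_add, LinearMap.add_apply, halt, zero_add, add_zero] at h
  exact eq_neg_of_add_eq_zero_right h

theorem qr_perp_ideal (halt : ∀ X, mul X X = 0)
    (hassoc : ∀ X Y Z, ⟪mul X Y, Z⟫ = ⟪X, mul Y Z⟫)
    {I : Submodule ℝ T} (hI : IsIdeal mul I) : IsIdeal mul Iᗮ := by
  intro x y hy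
  rw [Submodule.mem_orthogonal]
  intro u hu
  have h1 : ⟪u, mul x y⟫ = -⟪y, mul x u⟫ := by
    rw [real_inner_comm, qr_anticomm mul halt x y, inner_neg_left, hassoc]
  rw [h1, real_inner_comm, (Submodule.mem_orthogonal I y).1 hy _ (hI x u hu), neg_zero]

theorem qr_mul_zero {I J : Submodule ℝ T} (halt : ∀ X, mul X X = 0)
    (hI : IsIdeal mul I) (hJ : IsIdeal mul J) (hIJ : I ⊓ J = ⊥) :
    ∀ x ∈ I, ∀ y ∈ J, mul x y = 0 := by
  intro x hx y hy
  have h1 : mul x y ∈ J := hJ x y hy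
  have h2 : mul x y ∈ I := by
    rw [qr_anticomm mul halt]
    exact neg_mem (hI y x hx)
  have : mul x y ∈ I ⊓ J := ⟨h2, h1⟩
  rwa [hIJ, Submodule.mem_bot] at this

/-- span of the set of products of elements of S -/
def qrSq (S : Submodule ℝ T) : Submodule ℝ T :=
  Submodule.span ℝ {z | ∃ a ∈ S, ∃ b ∈ S, z = mul a b}

theorem qr_sq_eq_self {S : Submodule ℝ T} (hS : IsSimpleIdeal mul S)
    (hna : ¬ ∀ x ∈ S, ∀ y ∈ S, mul x y = 0) : qrSq mul S = S := by
  have hle : qrSq mul S ≤ S := by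
    rw [qrSq, Submodule.span_le]
    rintro z ⟨a, ha, b, hb, rfl⟩
    exact hS.1 a b hb
  rcases hS.2.2 (qrSq mul S) hle
      (fun x hx y hy => Submodule.subset_span ⟨x, hx, y, hle hy, rfl⟩) with h | h
  · exfalso
    exact hna fun x hx y hy => by
      have : mul x y ∈ qrSq mul S := Submodule.subset_span ⟨x, hx, y, hy, rfl⟩
      rwa [h, Submodule.mem_bot] at this
  · exact h

theorem qr_orth_of_mul_zero (hassoc : ∀ X Y Z, ⟪mul X Y, Z⟫ = ⟪X, mul Y Z⟫)
    {A S : Submodule ℝ T} (hsq : qrSq mul S = S)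
    (hz : ∀ b ∈ S, ∀ x ∈ A, mul b x = 0) :
    ∀ x ∈ A, ∀ y ∈ S, ⟪x, y⟫ = 0 := by
  intro x hx y hy
  rw [← hsq, qrSq] at hy
  induction hy using Submodule.span_induction with
  | mem z hz' =>
      obtain ⟨a, ha, b, hb, rfl⟩ := hz'
      rw [real_inner_comm, hassoc, hz b hb x hx, inner_zero_right]
  | zero => exact inner_zero_right x
  | add u v _ _ hu hv => rw [inner_add_right, hu, hv, add_zero]
  | smul c u _ hu => rw [inner_smul_right, hu, mul_zero]

theorem qr_abelian_inf_simple {J S : Submodule ℝ T}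
    (hJ : IsAbelianIdeal mul J) (hS : IsSimpleIdeal mul S)
    (hna : ¬ ∀ x ∈ S, ∀ y ∈ S, mul x y = 0) : J ⊓ S = ⊥ := by
  rcases hS.2.2 (J ⊓ S) inf_le_right
      (fun x hx y hy => ⟨hJ.1 x y hy.1, hS.1 x y hy.2⟩) with h | h
  · exact h
  · exfalso
    exact hna fun x hx y hy => hJ.2 x (by rw [← h] at hx; exact hx.1) y
      (by rw [← h] at hy; exact hy.1)

theorem qr_simple_inf_simple {S S' : Submodule ℝ T}
    (hS : IsSimpleIdeal mul S) (hS' : IsSimpleIdeal mul S') (hne : S ≠ S') :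
    S ⊓ S' = ⊥ := by
  rcases hS.2.2 (S ⊓ S') inf_le_left
      (fun x hx y hy => ⟨hS.1 x y hy.1, hS'.1 x y hy.2⟩) with h | h
  · exact h
  · rcases hS'.2.2 (S ⊓ S') inf_le_right
        (fun x hx y hy => ⟨hS.1 x y hy.1, hS'.1 x y hy.2⟩) with h' | h'
    · exact h'
    · exact absurd (h ▸ h') hne

theorem qr_ideal_sup {I J : Submodule ℝ T} (hI : IsIdeal mul I) (hJ : IsIdeal mul J) :
    IsIdeal mul (I ⊔ J) := by
  intro x y hy
  obtain ⟨a, ha, b, hb, rfl⟩ := Submodule.mem_sup.1 hy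
  rw [map_add]
  exact Submodule.add_mem_sup (hI x a ha) (hJ x b hb)

theorem qr_minimal_simple [FiniteDimensional ℝ T]
    (halt : ∀ X, mul X X = 0) (hassoc : ∀ X Y Z, ⟪mul X Y, Z⟫ = ⟪X, mul Y Z⟫)
    {M : Submodule ℝ T} (hM : IsIdeal mul M) (hne : M ≠ ⊥)
    (hmin : ∀ J : Submodule ℝ T, IsIdeal mul J → J ≤ M → J ≠ ⊥ → J = M) :
    IsSimpleIdeal mul M := by
  refine ⟨hM, hne, fun J hJle hJinv => ?_⟩
  have hJideal : IsIdeal mul J := by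
    intro x y hy
    have hx : x ∈ M ⊔ Mᗮ := by
      rw [Submodule.sup_orthogonal_of_hasOrthogonalProjection]; trivial
    obtain ⟨m, hm, n, hn, rfl⟩ := Submodule.mem_sup.1 hx
    have h0 : mul n y = 0 :=
      qr_mul_zero mul halt (qr_perp_ideal mul halt hassoc hM) hM
        (by rw [inf_comm]; exact M.orthogonal_disjoint.eq_bot) n hn y (hJle hy)
    rw [map_add, LinearMap.add_apply, h0, add_zero]
    exact hJinv m hm y hy
  by_cases hJ : J = ⊥
  · exact Or.inl hJ
  · exact Or.inr (hmin J hJideal hJle hJ)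

theorem qr_exists_decomp [FiniteDimensional ℝ T]
    (halt : ∀ X, mul X X = 0) (hassoc : ∀ X Y Z, ⟪mul X Y, Z⟫ = ⟪X, mul Y Z⟫) :
    ∀ n : ℕ, ∀ K : Submodule ℝ T, finrank ℝ K ≤ n → IsIdeal mul K →
    ∃ (I₀ : Submodule ℝ T) (r : ℕ) (I : Fin r → Submodule ℝ T),
      IsAbelianIdeal mul I₀ ∧ I₀ ≤ K ∧
      (∀ i, IsSimpleIdeal mul (I i)) ∧
      (∀ i, ¬ ∀ x ∈ I i, ∀ y ∈ I i, mul x y = 0) ∧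
      (∀ i, I i ≤ K) ∧
      (∀ i, ∀ x ∈ I₀, ∀ y ∈ I i, ⟪x, y⟫ = 0) ∧
      (∀ i j, i ≠ j → ∀ x ∈ I i, ∀ y ∈ I j, ⟪x, y⟫ = 0) ∧
      I₀ ⊔ (⨆ i, I i) = K := by
  classical
  intro n
  induction n using Nat.strong_induction_on with
  | _ n IH =>
    intro K hrank hK
    by_cases hKbot : K = ⊥
    · subst hKbot
      refine ⟨⊥, 0, Fin.elim0, ⟨fun x y hy => ?_, fun x hx y hy => ?_⟩, le_rfl,
        fun i => i.elim0, fun i => i.elim0, fun i => i.elim0, fun i => i.elim0,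
        fun i => i.elim0, ?_⟩
      · rw [Submodule.mem_bot] at hy ⊢; rw [hy, map_zero]
      · rw [Submodule.mem_bot] at hx; rw [hx, map_zero, LinearMap.zero_apply]
      · rw [iSup_of_empty, sup_bot_eq]
    · -- find a minimal nonzero ideal M ≤ K
      have hPne : ∃ m, ∃ J : Submodule ℝ T,
          IsIdeal mul J ∧ J ≤ K ∧ J ≠ ⊥ ∧ finrank ℝ J = m :=
        ⟨finrank ℝ K, K, hK, le_rfl, hKbot, rfl⟩
      obtain ⟨M, hMid, hMK, hMne, hMrank⟩ := Nat.find_spec hPne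
      have hminrk : ∀ J : Submodule ℝ T, IsIdeal mul J → J ≤ K → J ≠ ⊥ →
          finrank ℝ M ≤ finrank ℝ J := by
        intro J h1 h2 h3
        rw [hMrank]
        exact Nat.find_le ⟨J, h1, h2, h3, rfl⟩
      have hminM : ∀ J : Submodule ℝ T, IsIdeal mul J → J ≤ M → J ≠ ⊥ → J = M := by
        intro J h1 h2 h3
        exact Submodule.eq_of_le_of_finrank_le h2 (hminrk J h1 (h2.trans hMK) h3)
      set K' : Submodule ℝ T := Mᗮ ⊓ K with hK'def
      have hK'id : IsIdeal mul K' := fun x y hy =>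
        ⟨qr_perp_ideal mul halt hassoc hMid x y hy.1, hK x y hy.2⟩
      have hKsplit : K = M ⊔ K' := by
        rw [hK'def, ← sup_inf_assoc_of_le _ hMK,
          Submodule.sup_orthogonal_of_hasOrthogonalProjection, top_inf_eq]
      have hinfMK' : M ⊓ K' = ⊥ := by
        rw [eq_bot_iff]
        exact le_trans (inf_le_inf_left M inf_le_left) M.orthogonal_disjoint.le_bot
      have hK'M : K' ≤ Mᗮ := inf_le_left
      have hrk : finrank ℝ M + finrank ℝ K' = finrank ℝ K := by
        have h := Submodule.finrank_sup_add_finrank_inf_eq M K'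
        rw [← hKsplit, hinfMK', finrank_bot, add_zero] at h
        omega
      have hMpos : 0 < finrank ℝ M := by
        rcases Nat.eq_zero_or_pos (finrank ℝ M) with h | h
        · exact absurd (Submodule.finrank_eq_zero.1 h) hMne
        · exact h
      obtain ⟨I₀', r', I', hab, hleK', hsimp, hna, hleK2, horth0, horthij, hsup⟩ :=
        IH (finrank ℝ K') (by omega) K' le_rfl hK'id
      have hMbotI₀' : M ⊓ I₀' = ⊥ := by
        rw [eq_bot_iff]
        exact le_trans (inf_le_inf_left M (hleK'.trans hK'M)) M.orthogonal_disjoint.le_bot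
      by_cases hMab : ∀ x ∈ M, ∀ y ∈ M, mul x y = 0
      · -- M abelian: absorb into I₀'
        refine ⟨M ⊔ I₀', r', I', ⟨qr_ideal_sup mul hMid hab.1, ?_⟩,
          sup_le hMK (hleK'.trans inf_le_right), hsimp, hna,
          fun i => (hleK2 i).trans inf_le_right, ?_, horthij, ?_⟩
        · intro x hx y hy
          obtain ⟨a, ha, b, hb, rfl⟩ := Submodule.mem_sup.1 hx
          obtain ⟨c, hc, d, hd, rfl⟩ := Submodule.mem_sup.1 hy
          simp only [map_add, LinearMap.add_apply]
          rw [hMab a ha c hc, hab.2 b hb d hd,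
            qr_mul_zero mul halt hMid hab.1 hMbotI₀' a ha d hd,
            qr_mul_zero mul halt hab.1 hMid (by rw [inf_comm]; exact hMbotI₀') b hb c hc]
          simp
        · intro i x hx y hy
          obtain ⟨a, ha, b, hb, rfl⟩ := Submodule.mem_sup.1 hx
          rw [inner_add_left, horth0 i b hb y hy,
            (Submodule.mem_orthogonal M y).1 (hK'M (hleK2 i hy)) a ha, add_zero]
        · rw [sup_assoc, hsup, ← hKsplit]
      · -- M non-abelian: it is a new simple factor
        have hMsimp : IsSimpleIdeal mul M := qr_minimal_simple mul halt hassoc hMid hMne hminM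
        have hIMperp : ∀ i, I' i ≤ Mᗮ := fun i => (hleK2 i).trans hK'M
        refine ⟨I₀', r' + 1, Fin.cons M I', hab, hleK'.trans inf_le_right, ?_, ?_, ?_, ?_, ?_, ?_⟩
        · intro i
          induction i using Fin.cases with
          | zero => simpa using hMsimp
          | succ i' => simpa using hsimp i'
        · intro i
          induction i using Fin.cases with
          | zero => simpa using hMab
          | succ i' => simpa using hna i'
        · intro i
          induction i using Fin.cases with
          | zero => simpa using hMK
          | succ i' => simpa using (hleK2 i').trans inf_le_right
        · intro i
          induction i using Fin.cases with
          | zero =>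
            simp only [Fin.cons_zero]
            intro x hx y hy
            rw [real_inner_comm]
            exact (Submodule.mem_orthogonal M x).1 (hK'M (hleK' hx)) y hy
          | succ i' => simpa using horth0 i'
        · intro i j hij
          induction i using Fin.cases with
          | zero =>
            induction j using Fin.cases with
            | zero => exact absurd rfl hij
            | succ j' =>
              simp only [Fin.cons_zero, Fin.cons_succ]
              intro x hx y hy
              exact (Submodule.mem_orthogonal M y).1 (hIMperp j' hy) x hx
          | succ i' =>
            induction j using Fin.cases with
            | zero =>
              simp only [Fin.cons_zero, Fin.cons_succ]
              intro x hx y hy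
              rw [real_inner_comm]
              exact (Submodule.mem_orthogonal M x).1 (hIMperp i' hx) y hy
            | succ j' =>
              simp only [Fin.cons_succ]
              exact horthij i' j' (fun h => hij (congrArg Fin.succ h))
        · have hconsSup : (⨆ i, Fin.cons M I' i) = M ⊔ ⨆ i, I' i := by
            apply le_antisymm
            · refine iSup_le fun i => ?_
              induction i using Fin.cases with
              | zero => simpa using le_sup_left
              | succ i' => simpa using le_sup_of_le_right (le_iSup I' i')
            · refine sup_le ?_ (iSup_le fun i' => ?_)
              · simpa using le_iSup (Fin.cons M I' : Fin (r' + 1) → Submodule ℝ T) 0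
              · simpa using le_iSup (Fin.cons M I' : Fin (r' + 1) → Submodule ℝ T) i'.succ
          rw [hconsSup, sup_left_comm, hsup, ← hKsplit]

/-- Orthogonality of an abelian ideal to a non-abelian simple ideal. -/
theorem qr_abelian_orth_simple (halt : ∀ X, mul X X = 0)
    (hassoc : ∀ X Y Z, ⟪mul X Y, Z⟫ = ⟪X, mul Y Z⟫)
    {J S : Submodule ℝ T} (hJ : IsAbelianIdeal mul J) (hS : IsSimpleIdeal mul S)
    (hna : ¬ ∀ x ∈ S, ∀ y ∈ S, mul x y = 0) :
    ∀ x ∈ J, ∀ y ∈ S, ⟪x, y⟫ = 0 := by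
  refine qr_orth_of_mul_zero mul hassoc (qr_sq_eq_self mul hS hna) ?_
  intro b hb x hx
  exact qr_mul_zero mul halt hS.1 hJ.1
    (by rw [inf_comm]; exact qr_abelian_inf_simple mul hJ hS hna) b hb x hx

/-- Orthogonality of distinct simple ideals. -/
theorem qr_simple_orth_simple (halt : ∀ X, mul X X = 0)
    (hassoc : ∀ X Y Z, ⟪mul X Y, Z⟫ = ⟪X, mul Y Z⟫)
    {S S' : Submodule ℝ T} (hS : IsSimpleIdeal mul S) (hS' : IsSimpleIdeal mul S')
    (hna' : ¬ ∀ x ∈ S', ∀ y ∈ S', mul x y = 0) (hne : S ≠ S') :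
    ∀ x ∈ S, ∀ y ∈ S', ⟪x, y⟫ = 0 := by
  refine qr_orth_of_mul_zero mul hassoc (qr_sq_eq_self mul hS' hna') ?_
  intro b hb x hx
  exact qr_mul_zero mul halt hS'.1 hS.1
    (by rw [inf_comm]; exact qr_simple_inf_simple mul hS hS' hne) b hb x hx

/-- Any abelian ideal is contained in the abelian factor of a decomposition. -/
theorem qr_abelian_le (halt : ∀ X, mul X X = 0)
    (hassoc : ∀ X Y Z, ⟪mul X Y, Z⟫ = ⟪X, mul Y Z⟫)
    {I₀ : Submodule ℝ T} {r : ℕ} {I : Fin r → Submodule ℝ T}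
    (hsimp : ∀ i, IsSimpleIdeal mul (I i))
    (hna : ∀ i, ¬ ∀ x ∈ I i, ∀ y ∈ I i, mul x y = 0)
    (horth0 : ∀ i, ∀ x ∈ I₀, ∀ y ∈ I i, ⟪x, y⟫ = 0)
    (hsup : I₀ ⊔ (⨆ i, I i) = ⊤)
    {J : Submodule ℝ T} (hJ : IsAbelianIdeal mul J) : J ≤ I₀ := by
  intro x hx
  have hxT : x ∈ I₀ ⊔ (⨆ i, I i) := by rw [hsup]; trivial
  obtain ⟨a, ha, s, hs, hxas⟩ := Submodule.mem_sup.1 hxT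
  have hxs : ⟪x, s⟫ = 0 := by
    refine Submodule.iSup_induction (motive := fun t => ⟪x, t⟫ = 0) I hs ?_ (inner_zero_right x) ?_
    · exact fun i t ht => qr_abelian_orth_simple mul halt hassoc hJ (hsimp i) (hna i) x hx t ht
    · intro u v hu hv; rw [inner_add_right, hu, hv, add_zero]
  have has : ⟪a, s⟫ = 0 := by
    refine Submodule.iSup_induction (motive := fun t => ⟪a, t⟫ = 0) I hs ?_ (inner_zero_right a) ?_
    · exact fun i t ht => horth0 i a ha t ht
    · intro u v hu hv; rw [inner_add_right, hu, hv, add_zero]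
  have hs0 : s = 0 := by
    have h1 : ⟪s, s⟫ = ⟪x, s⟫ - ⟪a, s⟫ := by
      rw [← hxas, inner_add_left]; ring
    rw [hxs, has, sub_zero] at h1
    exact inner_self_eq_zero.1 h1
  rw [← hxas, hs0, add_zero]
  exact ha

/-- Every non-abelian simple ideal occurs in any decomposition. -/
theorem qr_simple_exists (halt : ∀ X, mul X X = 0)
    (hassoc : ∀ X Y Z, ⟪mul X Y, Z⟫ = ⟪X, mul Y Z⟫)
    {I₀ : Submodule ℝ T} {r : ℕ} {I : Fin r → Submodule ℝ T}
    (hab : IsAbelianIdeal mul I₀)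
    (hsimp : ∀ i, IsSimpleIdeal mul (I i))
    (hna : ∀ i, ¬ ∀ x ∈ I i, ∀ y ∈ I i, mul x y = 0)
    (hsup : I₀ ⊔ (⨆ i, I i) = ⊤)
    {S : Submodule ℝ T} (hS : IsSimpleIdeal mul S)
    (hSna : ¬ ∀ x ∈ S, ∀ y ∈ S, mul x y = 0) : ∃ i, S = I i := by
  by_contra hcon
  push_neg at hcon
  have hSI₀ : ∀ x ∈ S, ∀ y ∈ I₀, ⟪x, y⟫ = 0 := fun x hx y hy => by
    rw [real_inner_comm]
    exact qr_abelian_orth_simple mul halt hassoc hab hS hSna y hy x hx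
  have hSIi : ∀ i, ∀ x ∈ S, ∀ y ∈ I i, ⟪x, y⟫ = 0 := fun i =>
    qr_simple_orth_simple mul halt hassoc hS (hsimp i) (hna i) (hcon i)
  have hSbot : S = ⊥ := by
    rw [eq_bot_iff]
    intro x hx
    have hxT : x ∈ I₀ ⊔ (⨆ i, I i) := by rw [hsup]; trivial
    obtain ⟨a, ha, s, hs, hxas⟩ := Submodule.mem_sup.1 hxT
    have hxs : ⟪x, s⟫ = 0 := by
      refine Submodule.iSup_induction (motive := fun t => ⟪x, t⟫ = 0) I hs ?_ (inner_zero_right x) ?_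
      · exact fun i t ht => hSIi i x hx t ht
      · intro u v hu hv; rw [inner_add_right, hu, hv, add_zero]
    have hxx : ⟪x, x⟫ = 0 := by
      nth_rewrite 2 [← hxas]
      rw [inner_add_right, hSI₀ x hx a ha, hxs, add_zero]
    rw [Submodule.mem_bot]
    exact inner_self_eq_zero.1 hxx
  exact hS.2.1 hSbot

/-- Pairwise orthogonal nonzero ideals give an injective family. -/
theorem qr_fam_injective {r : ℕ} {I : Fin r → Submodule ℝ T}
    (hne : ∀ i, I i ≠ ⊥)
    (horth : ∀ i j, i ≠ j → ∀ x ∈ I i, ∀ y ∈ I j, ⟪x, y⟫ = 0) :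
    Function.Injective I := by
  intro i j hij
  by_contra hne'
  apply hne i
  rw [eq_bot_iff]
  intro x hx
  rw [Submodule.mem_bot]
  exact inner_self_eq_zero.1 (horth i j hne' x hx x (hij ▸ hx))

end QRAux

/-- Each QR-algebra T decomposes as a direct product (orthogonal direct sum of
pairwise orthogonal ideals) of its unique maximal abelian ideal I₀ and finitely
many non-abelian simple ideals I₁,…,I_r, uniquely up to the order of the simple
factors. -/
theorem stmt_8 [FiniteDimensional ℝ T] (mul : T →ₗ[ℝ] T →ₗ[ℝ] T)
    (halt : ∀ X, mul X X = 0)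
    (hassoc : ∀ X Y Z, ⟪mul X Y, Z⟫ = ⟪X, mul Y Z⟫) :
    ∃ (I₀ : Submodule ℝ T) (r : ℕ) (I : Fin r → Submodule ℝ T),
      IsAbelianIdeal mul I₀ ∧
      -- I₀ is the (unique) maximal abelian ideal
      (∀ J, IsAbelianIdeal mul J → J ≤ I₀) ∧
      (∀ i, IsSimpleIdeal mul (I i)) ∧
      (∀ i, ¬ ∀ x ∈ I i, ∀ y ∈ I i, mul x y = 0) ∧
      -- the factors are pairwise orthogonal
      (∀ i, ∀ x ∈ I₀, ∀ y ∈ I i, ⟪x, y⟫ = 0) ∧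
      (∀ i j, i ≠ j → ∀ x ∈ I i, ∀ y ∈ I j, ⟪x, y⟫ = 0) ∧
      -- the factors together span T
      (I₀ ⊔ (⨆ i, I i) = ⊤) ∧
      -- uniqueness of the decomposition, up to the order of the simple factors
      (∀ (I₀' : Submodule ℝ T) (r' : ℕ) (I' : Fin r' → Submodule ℝ T),
        IsAbelianIdeal mul I₀' →
        (∀ i, IsSimpleIdeal mul (I' i)) →
        (∀ i, ¬ ∀ x ∈ I' i, ∀ y ∈ I' i, mul x y = 0) →
        (∀ i, ∀ x ∈ I₀', ∀ y ∈ I' i, ⟪x, y⟫ = 0) →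
        (∀ i j, i ≠ j → ∀ x ∈ I' i, ∀ y ∈ I' j, ⟪x, y⟫ = 0) →
        (I₀' ⊔ (⨆ i, I' i) = ⊤) →
        I₀' = I₀ ∧ ∃ e : Fin r' ≃ Fin r, ∀ i, I' i = I (e i)) := by
  obtain ⟨I₀, r, I, hab, -, hsimp, hna, -, horth0, horthij, hsup⟩ :=
    qr_exists_decomp mul halt hassoc (Module.finrank ℝ (⊤ : Submodule ℝ T)) ⊤ le_rfl
      (fun x y _ => trivial)
  refine ⟨I₀, r, I, hab, ?_, hsimp, hna, horth0, horthij, hsup, ?_⟩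
  · exact fun J hJ => qr_abelian_le mul halt hassoc hsimp hna horth0 hsup hJ
  · intro I₀' r' I' hab' hsimp' hna' horth0' horthij' hsup'
    constructor
    · exact le_antisymm (qr_abelian_le mul halt hassoc hsimp hna horth0 hsup hab')
        (qr_abelian_le mul halt hassoc hsimp' hna' horth0' hsup' hab)
    · have hInj : Function.Injective I :=
        qr_fam_injective (fun i => (hsimp i).2.1) horthij
      have hInj' : Function.Injective I' :=
        qr_fam_injective (fun i => (hsimp' i).2.1) horthij'
      have hf : ∀ j : Fin r', ∃ i, I' j = I i := fun j =>
        qr_simple_exists mul halt hassoc hab hsimp hna hsup (hsimp' j) (hna' j)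
      have hg : ∀ i : Fin r, ∃ j, I i = I' j := fun i =>
        qr_simple_exists mul halt hassoc hab' hsimp' hna' hsup' (hsimp i) (hna i)
      choose f hfspec using hf
      choose g hgspec using hg
      refine ⟨⟨f, g, fun j => ?_, fun i => ?_⟩, fun j => hfspec j⟩
      · exact hInj' (by rw [← hgspec (f j), ← hfspec j])
      · exact hInj (by rw [← hfspec (g i), ← hgspec i])
end

section
/- Let P be a (1,1)-tensor field on a Riemannian manifold (M,g) with P² = I and g(PX,PY) = g(X,Y). Define ∇̄_X Y = ∇_X Y - (1/2)(∇_X P)(PY), where ∇ is the Levi-Civita connection. Then ∇̄ is an affine connection satisfying ∇̄P = 0 and ∇̄g = 0. -/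
/-- Let P be a (1,1)-tensor field on a Riemannian manifold (M,g) with P² = I and
g(PX,PY) = g(X,Y).  Define ∇̄_X Y = ∇_X Y - (1/2)(∇_X P)(PY), where ∇ is the
Levi-Civita connection.  Then ∇̄ is an affine connection satisfying ∇̄P = 0 and
∇̄g = 0.

Vector fields are modelled abstractly as a module `V` over the functions `M → ℝ`,
with `g` the metric, `D X f` the derivative of `f` along `X`, and `bracket` the
Lie bracket; `(∇_X P)(Y) = ∇_X(PY) - P(∇_X Y)`. -/
theorem stmt_9 {M V : Type*} [AddCommGroup V] [Module (M → ℝ) V]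
    (g : V → V → (M → ℝ)) (D : V → (M → ℝ) → (M → ℝ)) (bracket : V → V → V)
    (nabla : V → V → V)
    -- g is a Riemannian metric: symmetric and bilinear over functions
    (hg_symm : ∀ X Y, g X Y = g Y X)
    (hg_addl : ∀ X Y Z, g (X + Y) Z = g X Z + g Y Z)
    (hg_smull : ∀ (f : M → ℝ) (X Y : V), g (f • X) Y = f * g X Y)
    -- D is a derivation in the function argument
    (hD_add : ∀ X f₁ f₂, D X (f₁ + f₂) = D X f₁ + D X f₂)
    (hD_leibniz : ∀ X f₁ f₂, D X (f₁ * f₂) = D X f₁ * f₂ + f₁ * D X f₂)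
    -- ∇ is the Levi-Civita connection of g
    (haddl : ∀ X Y Z, nabla (X + Y) Z = nabla X Z + nabla Y Z)
    (haddr : ∀ X Y Z, nabla X (Y + Z) = nabla X Y + nabla X Z)
    (hsmull : ∀ (f : M → ℝ) (X Y : V), nabla (f • X) Y = f • nabla X Y)
    (hsmulr : ∀ (f : M → ℝ) (X Y : V), nabla X (f • Y) = D X f • Y + f • nabla X Y)
    (htf : ∀ X Y, nabla X Y - nabla Y X = bracket X Y)
    (hcompat : ∀ X Y Z, D X (g Y Z) = g (nabla X Y) Z + g Y (nabla X Z))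
    -- P is an almost product structure compatible with g
    (P : V →ₗ[M → ℝ] V)
    (hP2 : ∀ Y, P (P Y) = Y)
    (hPg : ∀ X Y, g (P X) (P Y) = g X Y)
    -- the canonical connection ∇̄_X Y = ∇_X Y - (1/2)(∇_X P)(PY)
    (nablabar : V → V → V)
    (hbar : ∀ X Y, nablabar X Y =
      nabla X Y - (1/2 : M → ℝ) • (nabla X (P (P Y)) - P (nabla X (P Y)))) :
    -- ∇̄ is an affine connection
    (∀ X Y Z, nablabar (X + Y) Z = nablabar X Z + nablabar Y Z) ∧
    (∀ X Y Z, nablabar X (Y + Z) = nablabar X Y + nablabar X Z) ∧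
    (∀ (f : M → ℝ) (X Y : V), nablabar (f • X) Y = f • nablabar X Y) ∧
    (∀ (f : M → ℝ) (X Y : V), nablabar X (f • Y) = D X f • Y + f • nablabar X Y) ∧
    -- ∇̄P = 0
    (∀ X Y, nablabar X (P Y) = P (nablabar X Y)) ∧
    -- ∇̄g = 0
    (∀ X Y Z, D X (g Y Z) = g (nablabar X Y) Z + g Y (nablabar X Z)) := by
  have key : ∀ X Y, nablabar X Y = (1/2 : M → ℝ) • (nabla X Y + P (nabla X (P Y))) := by
    intro X Y
    rw [hbar, hP2]
    match_scalars <;> (ext m; simp only [Pi.add_apply, Pi.sub_apply, Pi.mul_apply,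
      Pi.one_apply, Pi.zero_apply, Pi.div_apply, Pi.ofNat_apply, Pi.neg_apply]) <;> ring
  -- right-argument linearity of g
  have hg_addr : ∀ X Y Z, g X (Y + Z) = g X Y + g X Z := by
    intro X Y Z; rw [hg_symm, hg_addl, hg_symm Y, hg_symm Z]
  have hg_smulr : ∀ (f : M → ℝ) (X Y : V), g X (f • Y) = f * g X Y := by
    intro f X Y; rw [hg_symm, hg_smull, hg_symm]
  have hPg' : ∀ X Y, g (P X) Y = g X (P Y) := by
    intro X Y
    calc g (P X) Y = g (P X) (P (P Y)) := by rw [hP2]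
    _ = g X (P Y) := hPg _ _
  refine ⟨?_, ?_, ?_, ?_, ?_, ?_⟩
  · intro X Y Z
    rw [key, key, key, haddl, haddl, map_add]
    match_scalars <;> (ext m; simp only [Pi.add_apply, Pi.sub_apply, Pi.mul_apply,
      Pi.one_apply, Pi.zero_apply, Pi.div_apply, Pi.ofNat_apply, Pi.neg_apply]) <;> ring
  · intro X Y Z
    rw [key, key, key, haddr, map_add, haddr, map_add]
    match_scalars <;> (ext m; simp only [Pi.add_apply, Pi.sub_apply, Pi.mul_apply,
      Pi.one_apply, Pi.zero_apply, Pi.div_apply, Pi.ofNat_apply, Pi.neg_apply]) <;> ring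
  · intro f X Y
    rw [key, key, hsmull, hsmull, map_smul]
    match_scalars <;> (ext m; simp only [Pi.add_apply, Pi.sub_apply, Pi.mul_apply,
      Pi.one_apply, Pi.zero_apply, Pi.div_apply, Pi.ofNat_apply, Pi.neg_apply]) <;> ring
  · intro f X Y
    rw [key, key, hsmulr, map_smul, hsmulr, map_add, map_smul, map_smul, hP2]
    match_scalars <;> (ext m; simp only [Pi.add_apply, Pi.sub_apply, Pi.mul_apply,
      Pi.one_apply, Pi.zero_apply, Pi.div_apply, Pi.ofNat_apply, Pi.neg_apply]) <;> ring
  · intro X Y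
    rw [key, key, map_smul, map_add, hP2, hP2]
    match_scalars <;> (ext m; simp only [Pi.add_apply, Pi.sub_apply, Pi.mul_apply,
      Pi.one_apply, Pi.zero_apply, Pi.div_apply, Pi.ofNat_apply, Pi.neg_apply]) <;> ring
  · intro X Y Z
    rw [key, key]
    simp only [smul_add]
    rw [hg_addl, hg_addr, hg_smull, hg_smull, hg_smulr, hg_smulr]
    have e1 : g (P (nabla X (P Y))) Z = g (nabla X (P Y)) (P Z) := hPg' _ _
    have e2 : g Y (P (nabla X (P Z))) = g (P Y) (nabla X (P Z)) := by
      rw [hg_symm, hPg', hg_symm]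
    rw [e1, e2]
    have c1 := hcompat X Y Z
    have c2 := hcompat X (P Y) (P Z)
    rw [hPg] at c2
    ext m
    have h1 := congrFun c1 m
    have h2 := congrFun c2 m
    simp only [Pi.add_apply, Pi.mul_apply] at h1 h2 ⊢
    have hhalf : (1/2 : M → ℝ) m = 1/2 := rfl
    rw [hhalf]
    linarith
end

section
/- For an almost product Riemannian structure (P,g) with P² = I, g(PX,PY)=g(X,Y), canonical connection ∇̄_X Y = (1/2)(∇_X Y + P∇_X PY), and torsion T̄ of ∇̄, the Nijenhuis tensor of P satisfies N(P)(X,Y) = -2(T̄_{PX}PY + T̄_X Y). Consequently P is integrable (N(P)=0) iff T̄_{PX}PY = -T̄_X Y for all X,Y. -/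
/-- For an almost product Riemannian structure (P,g) with canonical connection
∇̄_X Y = (1/2)(∇_X Y + P∇_X PY) and torsion T̄ of ∇̄, the Nijenhuis tensor of P
satisfies N(P)(X,Y) = -2(T̄_{PX}PY + T̄_X Y).  Consequently P is integrable
(N(P) = 0) iff T̄_{PX}PY = -T̄_X Y for all X, Y. -/
theorem stmt_10 {V : Type*} [AddCommGroup V] [Module ℝ V]
    (bracket : V → V → V) (nabla : V → V → V)
    -- the Levi-Civita connection is torsion-free
    (htf : ∀ X Y, nabla X Y - nabla Y X = bracket X Y)
    -- P is an almost product structure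
    (P : V →ₗ[ℝ] V) (hP2 : ∀ Y, P (P Y) = Y)
    -- the canonical connection
    (nablabar : V → V → V)
    (hbar : ∀ X Y, nablabar X Y = (1/2 : ℝ) • (nabla X Y + P (nabla X (P Y))))
    -- its torsion
    (Tbar : V → V → V)
    (hT : ∀ X Y, Tbar X Y = nablabar X Y - nablabar Y X - bracket X Y)
    -- the Nijenhuis tensor of P
    (N : V → V → V)
    (hN : ∀ X Y, N X Y = bracket (P X) (P Y) - P (bracket X (P Y))
      - P (bracket (P X) Y) + bracket X Y) :
    (∀ X Y, N X Y = (-2 : ℝ) • (Tbar (P X) (P Y) + Tbar X Y)) ∧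
    ((∀ X Y, N X Y = 0) ↔ ∀ X Y, Tbar (P X) (P Y) = - Tbar X Y) := by
  have key : ∀ X Y, N X Y = (-2 : ℝ) • (Tbar (P X) (P Y) + Tbar X Y) := by
    intro X Y
    rw [hN, hT, hT, hbar, hbar, hbar, hbar, hP2, hP2,
      ← htf X Y, ← htf (P X) (P Y), ← htf X (P Y), ← htf (P X) Y]
    simp only [map_sub, map_add, smul_sub, smul_add]
    module
  refine ⟨key, ?_, ?_⟩
  · intro h X Y
    have := key X Y
    rw [h] at this
    have h2 : Tbar (P X) (P Y) + Tbar X Y = 0 := by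
      have := this.symm
      rwa [smul_eq_zero_iff_right (by norm_num : (-2:ℝ) ≠ 0)] at this
    linear_combination (norm := abel) h2
  · intro h X Y
    rw [key, h]
    abel_nf
    simp
end

section
/- An almost product Riemannian structure (P,g) is nearly particular (i.e., h_X X = 0 for all X, where h = ∇ - ∇̄) if and only if it is particular (h = 0, i.e., ∇P = 0). Equivalently: if (∇_X P)X = 0 for all vector fields X, then ∇P = 0. -/
/-- An almost product Riemannian structure (P,g) is nearly particular
(h_X X = 0 for all X, where h = ∇ - ∇̄, equivalently (∇_X P)X = 0 for all X) if
and only if it is particular (h = 0, i.e. ∇P = 0).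

Vector fields are modelled abstractly as a module `V` over the functions `M → ℝ`,
with `g` the (nondegenerate) metric, `D X f` the derivative of `f` along `X`, and
`bracket` the Lie bracket. -/
theorem stmt_11 {M V : Type*} [AddCommGroup V] [Module (M → ℝ) V]
    (g : V → V → (M → ℝ)) (D : V → (M → ℝ) → (M → ℝ)) (bracket : V → V → V)
    (nabla : V → V → V)
    -- g is a Riemannian metric: symmetric, bilinear over functions, nondegenerate
    (hg_symm : ∀ X Y, g X Y = g Y X)
    (hg_addl : ∀ X Y Z, g (X + Y) Z = g X Z + g Y Z)
    (hg_smull : ∀ (f : M → ℝ) (X Y : V), g (f • X) Y = f * g X Y)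
    (hg_nondeg : ∀ X, (∀ Z, g X Z = 0) → X = 0)
    -- D is a derivation in the function argument
    (hD_add : ∀ X f₁ f₂, D X (f₁ + f₂) = D X f₁ + D X f₂)
    (hD_leibniz : ∀ X f₁ f₂, D X (f₁ * f₂) = D X f₁ * f₂ + f₁ * D X f₂)
    -- ∇ is the Levi-Civita connection of g
    (haddl : ∀ X Y Z, nabla (X + Y) Z = nabla X Z + nabla Y Z)
    (haddr : ∀ X Y Z, nabla X (Y + Z) = nabla X Y + nabla X Z)
    (hsmull : ∀ (f : M → ℝ) (X Y : V), nabla (f • X) Y = f • nabla X Y)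
    (hsmulr : ∀ (f : M → ℝ) (X Y : V), nabla X (f • Y) = D X f • Y + f • nabla X Y)
    (htf : ∀ X Y, nabla X Y - nabla Y X = bracket X Y)
    (hcompat : ∀ X Y Z, D X (g Y Z) = g (nabla X Y) Z + g Y (nabla X Z))
    -- P is an almost product structure compatible with g
    (P : V →ₗ[M → ℝ] V)
    (hP2 : ∀ Y, P (P Y) = Y)
    (hPg : ∀ X Y, g (P X) (P Y) = g X Y)
    -- the second fundamental tensor field h_X Y = (1/2)(∇_X P)(PY)
    (h : V → V → V)
    (hdef : ∀ X Y, h X Y = (1/2 : M → ℝ) • (nabla X (P (P Y)) - P (nabla X (P Y)))) :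
    -- nearly particular ↔ particular, i.e. (∇_X P)X = 0 for all X ↔ ∇P = 0
    ((∀ X, h X X = 0) ↔ ∀ X Y, h X Y = 0) ∧
    ((∀ X, nabla X (P X) = P (nabla X X)) ↔ ∀ X Y, nabla X (P Y) = P (nabla X Y)) := by
  -- auxiliary facts about g
  have g_negl : ∀ (X Z : V), g (-X) Z = -(g X Z) := by
    intro X Z
    have e : (-X : V) = (-1 : M → ℝ) • X := by rw [neg_one_smul]
    rw [e, hg_smull]; ring_nf
  have g_subl : ∀ (X Y Z : V), g (X - Y) Z = g X Z - g Y Z := by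
    intro X Y Z
    rw [sub_eq_add_neg, hg_addl, g_negl, sub_eq_add_neg]
  have g_subr : ∀ (X Y Z : V), g X (Y - Z) = g X Y - g X Z := by
    intro X Y Z
    rw [hg_symm, g_subl, hg_symm Y X, hg_symm Z X]
  -- P is g-symmetric
  have Psym : ∀ (Y Z : V), g (P Y) Z = g Y (P Z) := by
    intro Y Z
    calc g (P Y) Z = g (P Y) (P (P Z)) := by rw [hP2]
      _ = g Y (P Z) := hPg _ _
  -- the tensor A X Y = (∇_X P) Y
  set A : V → V → V := fun X Y => nabla X (P Y) - P (nabla X Y) with hA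
  -- A is symmetric in the sense g (A X Y) Z = g (A X Z) Y
  have Asym : ∀ X Y Z, g (A X Y) Z = g (A X Z) Y := by
    intro X Y Z
    have e1 : D X (g (P Y) Z) = g (nabla X (P Y)) Z + g (P Y) (nabla X Z) := hcompat _ _ _
    have e2 : D X (g Y (P Z)) = g (nabla X Y) (P Z) + g Y (nabla X (P Z)) := hcompat _ _ _
    have e3 : g (nabla X (P Y)) Z + g (P Y) (nabla X Z)
        = g (nabla X Y) (P Z) + g Y (nabla X (P Z)) := by
      rw [← e1, ← e2, Psym]
    have e4 : g (P (nabla X Y)) Z = g (nabla X Y) (P Z) := Psym _ _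
    calc g (A X Y) Z = g (nabla X (P Y)) Z - g (P (nabla X Y)) Z := by
            simp only [hA]; rw [g_subl]
      _ = g Y (nabla X (P Z)) - g (P Y) (nabla X Z) := by rw [e4]; linear_combination e3
      _ = g Y (nabla X (P Z)) - g Y (P (nabla X Z)) := by rw [Psym]
      _ = g Y (A X Z) := by simp only [hA]; rw [g_subr]
      _ = g (A X Z) Y := hg_symm _ _
  -- the key implication: nearly particular → particular
  have key : (∀ X, nabla X (P X) = P (nabla X X)) → ∀ X Y, nabla X (P Y) = P (nabla X Y) := by
    intro hyp
    have hAzero : ∀ X, A X X = 0 := by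
      intro X; simp only [hA]; rw [hyp]; exact sub_self _
    have anti : ∀ X Y, A X Y = -(A Y X) := by
      intro X Y
      have h0 := hAzero (X + Y)
      have expand : A (X + Y) (X + Y) = A X X + A X Y + A Y X + A Y Y := by
        simp only [hA, haddl, haddr, map_add]
        abel
      rw [expand, hAzero, hAzero] at h0
      have hsum : A X Y + A Y X = 0 := by simpa using h0
      exact eq_neg_of_add_eq_zero_left hsum
    have Azero : ∀ X Y, A X Y = 0 := by
      intro X Y
      apply hg_nondeg
      intro Z
      have chain : g (A X Y) Z = -(g (A X Y) Z) := by
        calc g (A X Y) Z = g (A X Z) Y := Asym _ _ _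
          _ = g (-(A Z X)) Y := by rw [← anti]
          _ = -(g (A Z X) Y) := g_negl _ _
          _ = -(g (A Z Y) X) := by rw [Asym]
          _ = -(g (-(A Y Z)) X) := by rw [← anti]
          _ = -(-(g (A Y Z) X)) := by rw [g_negl]
          _ = g (A Y Z) X := neg_neg _
          _ = g (A Y X) Z := Asym _ _ _
          _ = g (-(A X Y)) Z := by rw [← anti]
          _ = -(g (A X Y) Z) := g_negl _ _
      funext m
      have := congrFun chain m
      simp only [Pi.neg_apply, Pi.zero_apply] at this ⊢
      linarith
    intro X Y
    have := Azero X Y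
    simp only [hA] at this
    exact sub_eq_zero.mp this
  -- h X Y = 0 iff ∇_X (P Y) = P (∇_X Y)
  have half : ∀ w : V, (1/2 : M → ℝ) • w = 0 → w = 0 := by
    intro w hw
    have h2 : ((2 : M → ℝ) * (1/2 : M → ℝ)) = 1 := by
      funext m; show (2:ℝ) * (1/2 : ℝ) = 1; norm_num
    calc w = ((2 : M → ℝ) * (1/2 : M → ℝ)) • w := by rw [h2, one_smul]
      _ = (2 : M → ℝ) • ((1/2 : M → ℝ) • w) := mul_smul _ _ _
      _ = 0 := by rw [hw, smul_zero]
  have hzero : ∀ X Y, h X Y = 0 ↔ nabla X (P Y) = P (nabla X Y) := by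
    intro X Y
    constructor
    · intro hh
      rw [hdef] at hh
      have := half _ hh
      rw [hP2] at this
      have e : nabla X Y = P (nabla X (P Y)) := by
        have := sub_eq_zero.mp this
        exact this
      calc nabla X (P Y) = P (P (nabla X (P Y))) := (hP2 _).symm
        _ = P (nabla X Y) := by rw [← e]
    · intro e
      rw [hdef, hP2, e, hP2, sub_self, smul_zero]
  refine ⟨?_, ⟨key, fun hall X => hall X X⟩⟩
  constructor
  · intro hXX X Y
    rw [hzero]
    apply key
    intro X'
    exact (hzero X' X').mp (hXX X')
  · intro hall X
    exact hall X X
end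

section
/- Let S be an endomorphism field on a Riemannian manifold (M,g) with S^k = I, g(SX,SY) = g(X,Y), and ∇ the Levi-Civita connection. Then the connection ∇̃_X Y = (1/k) Σ_{j=0}^{k-1} S^j ∇_X (S^{k-j} Y) satisfies ∇̃S = 0 and ∇̃g = 0. -/
/-- Let S be an endomorphism field on a Riemannian manifold (M,g) with S^k = I and
g(SX,SY) = g(X,Y), and ∇ the Levi-Civita connection.  Then the connection
∇̃_X Y = (1/k) Σ_{j=0}^{k-1} S^j ∇_X (S^{k-j} Y) satisfies ∇̃S = 0 and ∇̃g = 0. -/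
theorem stmt_19 {M V : Type*} [AddCommGroup V] [Module (M → ℝ) V]
    (g : V → V → (M → ℝ)) (D : V → (M → ℝ) → (M → ℝ)) (bracket : V → V → V)
    (nabla : V → V → V)
    -- g is a Riemannian metric
    (hg_symm : ∀ X Y, g X Y = g Y X)
    (hg_addl : ∀ X Y Z, g (X + Y) Z = g X Z + g Y Z)
    (hg_smull : ∀ (f : M → ℝ) (X Y : V), g (f • X) Y = f * g X Y)
    -- ∇ is the Levi-Civita connection of g
    (htf : ∀ X Y, nabla X Y - nabla Y X = bracket X Y)
    (hcompat : ∀ X Y Z, D X (g Y Z) = g (nabla X Y) Z + g Y (nabla X Z))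
    -- S is an endomorphism field with S^k = I, compatible with g
    (k : ℕ) (hk : 0 < k)
    (S : V →ₗ[M → ℝ] V)
    (hSk : ∀ Y, (S ^ k) Y = Y)
    (hSg : ∀ X Y, g (S X) (S Y) = g X Y)
    -- the connection ∇̃_X Y = (1/k) Σ_{j=0}^{k-1} S^j ∇_X (S^{k-j} Y)
    (tnabla : V → V → V)
    (htilde : ∀ X Y, tnabla X Y =
      (1 / (k : M → ℝ)) • ∑ j ∈ Finset.range k, (S ^ j) (nabla X ((S ^ (k - j)) Y))) :
    -- ∇̃S = 0
    (∀ X Y, tnabla X (S Y) = S (tnabla X Y)) ∧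
    -- ∇̃g = 0
    (∀ X Y Z, D X (g Y Z) = g (tnabla X Y) Z + g Y (tnabla X Z)) := by
  -- g linear in first argument as a linear map
  have hSg_pow : ∀ (m : ℕ) (Y Z : V), g ((S ^ m) Y) ((S ^ m) Z) = g Y Z := by
    intro m
    induction m with
    | zero => intro Y Z; simp
    | succ n ih =>
      intro Y Z
      have h1 : (S ^ (n + 1)) Y = (S ^ n) (S Y) := by
        rw [pow_succ]; rfl
      have h2 : (S ^ (n + 1)) Z = (S ^ n) (S Z) := by
        rw [pow_succ]; rfl
      rw [h1, h2, ih, hSg]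
  obtain ⟨m, rfl⟩ : ∃ m, k = m + 1 := ⟨k - 1, (Nat.succ_pred_eq_of_pos hk).symm⟩
  set k := m + 1 with hkdef
  constructor
  · -- ∇̃ S = S ∇̃
    intro X Y
    rw [htilde, htilde, map_smul, map_sum]
    congr 1
    rw [Finset.sum_range_succ' (fun j => (S ^ j) (nabla X ((S ^ (k - j)) (S Y)))) m,
        Finset.sum_range_succ (fun j => S ((S ^ j) (nabla X ((S ^ (k - j)) Y)))) m]
    congr 1
    · apply Finset.sum_congr rfl
      intro j hj
      have hj' : j ≤ m := Nat.le_of_lt_succ (by simpa using Nat.lt_succ_of_lt (Finset.mem_range.mp hj))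
      have hjm : j < m := Finset.mem_range.mp hj
      have e1 : k - (j + 1) = m - j := by omega
      have e2 : (S ^ (m - j)) (S Y) = (S ^ (k - j)) Y := by
        have : k - j = (m - j) + 1 := by omega
        rw [this, pow_succ]; rfl
      have e3 : S ((S ^ j) (nabla X ((S ^ (k - j)) Y)))
          = (S ^ (j + 1)) (nabla X ((S ^ (k - j)) Y)) := by
        rw [pow_succ']; rfl
      simp only [e1, e2, e3]
    · -- f 0 term vs term at m
      show (S ^ 0) (nabla X ((S ^ (k - 0)) (S Y))) = S ((S ^ m) (nabla X ((S ^ (k - m)) Y)))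
      have e1 : (S ^ (k - 0)) (S Y) = S Y := by simpa using hSk (S Y)
      have e2 : (S ^ (k - m)) Y = S Y := by
        have : k - m = 1 := by omega
        rw [this, pow_one]
      have e3 : S ((S ^ m) (nabla X (S Y))) = (S ^ k) (nabla X (S Y)) := by
        rw [pow_succ']; rfl
      rw [e1, e2, e3, hSk]
      simp
  · -- metric compatibility
    intro X Y Z
    have g_sum : ∀ (n : ℕ) (f : ℕ → V) (W : V),
        g (∑ j ∈ Finset.range n, f j) W = ∑ j ∈ Finset.range n, g (f j) W := by
      intro n f W
      induction n with
      | zero =>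
        have : g ((0 : M → ℝ) • (0 : V)) W = 0 * g (0 : V) W := hg_smull 0 0 W
        simpa using this
      | succ n ih =>
        rw [Finset.sum_range_succ, Finset.sum_range_succ, hg_addl, ih]
    have key : ∀ j ∈ Finset.range k,
        g ((S ^ j) (nabla X ((S ^ (k - j)) Y))) Z + g Y ((S ^ j) (nabla X ((S ^ (k - j)) Z)))
          = D X (g Y Z) := by
      intro j hj
      have hjk : j ≤ k := le_of_lt (Finset.mem_range.mp hj)
      have hZ : (S ^ j) ((S ^ (k - j)) Z) = Z := by
        have : (S ^ j) ((S ^ (k - j)) Z) = (S ^ (j + (k - j))) Z := by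
          rw [pow_add]; rfl
        rw [this, Nat.add_sub_cancel' hjk, hSk]
      have hY : (S ^ j) ((S ^ (k - j)) Y) = Y := by
        have : (S ^ j) ((S ^ (k - j)) Y) = (S ^ (j + (k - j))) Y := by
          rw [pow_add]; rfl
        rw [this, Nat.add_sub_cancel' hjk, hSk]
      calc g ((S ^ j) (nabla X ((S ^ (k - j)) Y))) Z + g Y ((S ^ j) (nabla X ((S ^ (k - j)) Z)))
          = g ((S ^ j) (nabla X ((S ^ (k - j)) Y))) ((S ^ j) ((S ^ (k - j)) Z))
            + g ((S ^ j) ((S ^ (k - j)) Y)) ((S ^ j) (nabla X ((S ^ (k - j)) Z))) := by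
            rw [hZ, hY]
        _ = g (nabla X ((S ^ (k - j)) Y)) ((S ^ (k - j)) Z)
            + g ((S ^ (k - j)) Y) (nabla X ((S ^ (k - j)) Z)) := by
            rw [hSg_pow, hSg_pow]
        _ = D X (g ((S ^ (k - j)) Y) ((S ^ (k - j)) Z)) := (hcompat _ _ _).symm
        _ = D X (g Y Z) := by rw [hSg_pow]
    have hL : g (tnabla X Y) Z
        = (1 / (k : M → ℝ)) * ∑ j ∈ Finset.range k, g ((S ^ j) (nabla X ((S ^ (k - j)) Y))) Z := by
      rw [htilde, hg_smull, g_sum]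
    have hR : g Y (tnabla X Z)
        = (1 / (k : M → ℝ)) * ∑ j ∈ Finset.range k, g Y ((S ^ j) (nabla X ((S ^ (k - j)) Z))) := by
      rw [hg_symm, htilde, hg_smull, g_sum]
      congr 1
      apply Finset.sum_congr rfl
      intro j _
      rw [hg_symm]
    rw [hL, hR, ← mul_add, ← Finset.sum_add_distrib, Finset.sum_congr rfl key,
        Finset.sum_const, Finset.card_range]
    funext t
    have hk0 : ((k : ℕ) : ℝ) ≠ 0 := Nat.cast_ne_zero.mpr hk.ne'
    simp only [Pi.mul_apply, Pi.smul_apply, Pi.one_apply, Pi.div_apply, Pi.natCast_apply,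
      smul_eq_mul, nsmul_eq_mul, one_div, Pi.inv_apply]
    field_simp
end
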